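/- Let f and g be real polynomials, each with only real and distinct zeros, such that g strictly interlaces or strictly alternates left of f. Then g' strictly interlaces or strictly alternates left of f' (Markov's theorem on derivatives of interlacing polynomials). -/

import Mathlib

open Polynomial

/-- `g` strictly interlaces or strictly alternates left of `f`: listing the zeros
of `f` in strictly decreasing order `u` and those of `g` in strictly decreasing
order `v`, either `deg f = deg g + 1` and `u_{i+1} < v_i < u_i` for all `i`, or
`deg f = deg g` and `v_i < u_i` for all `i` and `u_{i+1} < v_i` whenever `i + 1`
is a valid index. -/
def StrictlyPrec (g f : Polynomial ℝ) : Prop :=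
  ∃ u v : List ℝ, f.roots = (u : Multiset ℝ) ∧ g.roots = (v : Multiset ℝ) ∧
    u.Pairwise (· > ·) ∧ v.Pairwise (· > ·) ∧
    ((u.length = v.length + 1 ∧
        ∀ i, i < v.length → u.getD (i + 1) 0 < v.getD i 0 ∧ v.getD i 0 < u.getD i 0) ∨
      (u.length = v.length ∧
        ∀ i, i < v.length → v.getD i 0 < u.getD i 0 ∧
          (i + 1 < u.length → u.getD (i + 1) 0 < v.getD i 0)))

namespace MarkovAux

open Finset



lemma sorted_getD_lt {l : List ℝ} (hl : l.Pairwise (· > ·)) {i j : ℕ}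
    (hij : i < j) (hj : j < l.length) : l.getD j 0 < l.getD i 0 := by
  rw [List.getD_eq_getElem _ _ hj, List.getD_eq_getElem _ _ (hij.trans hj)]
  exact List.pairwise_iff_getElem.mp hl i j (hij.trans hj) hj hij

lemma sorted_getD_le {l : List ℝ} (hl : l.Pairwise (· > ·)) {i j : ℕ}
    (hij : i ≤ j) (hj : j < l.length) : l.getD j 0 ≤ l.getD i 0 := by
  rcases eq_or_lt_of_le hij with rfl | h
  · exact le_rfl
  · exact (sorted_getD_lt hl h hj).le

lemma sorted_nodup {l : List ℝ} (hl : l.Pairwise (· > ·)) : l.Nodup :=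
  hl.imp ne_of_gt

lemma prod_sign_pos (t : ℝ) : ∀ (l : List ℝ) (k : ℕ), k ≤ l.length →
    (∀ j, j < k → t < l.getD j 0) → (∀ j, k ≤ j → j < l.length → l.getD j 0 < t) →
    0 < (-1 : ℝ)^k * (l.map (fun z => t - z)).prod := by
  intro l
  induction l with
  | nil =>
    intro k hk _ _
    have : k = 0 := by simpa using hk
    subst this
    simp
  | cons a l ih =>
    intro k hk h1 h2
    cases k with
    | zero =>
      have ha : a < t := by simpa using h2 0 le_rfl (by simp)
      have H := ih 0 (Nat.zero_le _) (by intro j hj; omega)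
        (by intro j _ hj
            have := h2 (j+1) (Nat.zero_le _) (by simpa using Nat.succ_lt_succ hj)
            simpa using this)
      simp only [pow_zero, one_mul] at H ⊢
      rw [List.map_cons, List.prod_cons]
      have : 0 < t - a := by linarith
      positivity
    | succ k =>
      have ha : t < a := by simpa using h1 0 (Nat.succ_pos _)
      have H := ih k (by simpa using hk)
        (by intro j hj
            have := h1 (j+1) (Nat.succ_lt_succ hj)
            simpa using this)
        (by intro j hj hj'
            have := h2 (j+1) (Nat.succ_le_succ hj) (by simpa using Nat.succ_lt_succ hj')
            simpa using this)
      rw [List.map_cons, List.prod_cons, pow_succ]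
      have hta : t - a < 0 := by linarith
      nlinarith [H]

lemma split_sorted {l : List ℝ} (hl : l.Pairwise (· > ·)) (t : ℝ) (ht : t ∉ l) :
    ∃ k, k ≤ l.length ∧ (∀ j, j < k → t < l.getD j 0) ∧
      (∀ j, k ≤ j → j < l.length → l.getD j 0 < t) := by
  induction l with
  | nil => exact ⟨0, by simp, by omega, by simp⟩
  | cons a l ih =>
    have hl' : l.Pairwise (· > ·) := hl.of_cons
    have ht' : t ∉ l := fun h => ht (List.mem_cons_of_mem _ h)
    have hta : t ≠ a := fun h => ht (by simp [h])
    rcases lt_or_gt_of_ne hta with hlt | hgt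
    · obtain ⟨k, hk, h1, h2⟩ := ih hl' ht'
      refine ⟨k+1, by simpa using Nat.succ_le_succ hk, ?_, ?_⟩
      · intro j hj
        cases j with
        | zero => simpa using hlt
        | succ j => simpa using h1 j (by omega)
      · intro j hj hj'
        cases j with
        | zero => omega
        | succ j => simpa using h2 j (by omega) (by simpa using hj')
    · refine ⟨0, Nat.zero_le _, by omega, ?_⟩
      intro j _ hj
      cases j with
      | zero => simpa using hgt
      | succ j =>
        have hj'' : j < l.length := by simpa using hj
        have : l.getD j 0 < a := by
          have := List.pairwise_iff_getElem.mp hl  -- a > all elements of l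
          rw [List.getD_eq_getElem _ _ hj'']
          exact (List.rel_of_pairwise_cons hl (List.getElem_mem _)).lt  -- maybe wrong
        simp only [List.getD_cons_succ]
        linarith



lemma roots_coe_length {p : ℝ[X]} {l : List ℝ} (hp : p.roots = ↑l)
    (hcard : p.roots.card = p.natDegree) : l.length = p.natDegree := by
  rw [hp] at hcard; simpa using hcard

lemma eval_eq_prod {p : ℝ[X]} {l : List ℝ} (hp0 : p ≠ 0) (hp : p.roots = ↑l)
    (hlen : l.length = p.natDegree) (t : ℝ) :
    p.eval t = p.leadingCoeff * (l.map (fun z => t - z)).prod := by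
  have hsplit : Splits p := by
    rw [splits_iff_card_roots, hp]; simpa using hlen
  conv_lhs => rw [hsplit.eq_prod_roots]
  rw [hp]
  rw [eval_mul, eval_C]
  congr 1
  rw [Multiset.map_coe, Multiset.prod_coe]
  rw [eval_list_prod, List.map_map]
  congr 1
  exact List.map_congr_left fun z _ => by simp

lemma list_prod_eq_range {M : Type*} [CommMonoid M] (φ : ℝ → M) :
    ∀ l : List ℝ, (l.map φ).prod = ∏ i ∈ Finset.range l.length, φ (l.getD i 0) := by
  intro l
  induction l with
  | nil => simp
  | cons a l ih =>
    rw [List.map_cons, List.prod_cons, ih, List.length_cons, Finset.prod_range_succ']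
    simp [mul_comm]

lemma poly_eq_prod_range {p : ℝ[X]} {l : List ℝ} (hp0 : p ≠ 0) (hp : p.roots = ↑l)
    (hlen : l.length = p.natDegree) :
    p = C p.leadingCoeff * ∏ i ∈ Finset.range l.length, (X - C (l.getD i 0)) := by
  have hsplit : Splits p := by
    rw [splits_iff_card_roots, hp]; simpa using hlen
  conv_lhs => rw [hsplit.eq_prod_roots]
  rw [hp]
  congr 1
  rw [Multiset.map_coe, Multiset.prod_coe]
  exact list_prod_eq_range _ l



lemma parity_of_sign {c : ℝ} {k m : ℕ} (h1 : 0 < (-1 : ℝ)^k * c)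
    (h2 : 0 < (-1 : ℝ)^m * c) : k % 2 = m % 2 := by
  rcases Nat.even_or_odd k with hk | hk <;> rcases Nat.even_or_odd m with hm | hm
  · rw [Nat.even_iff] at hk hm; omega
  · rw [hk.neg_one_pow] at h1; rw [hm.neg_one_pow] at h2; linarith
  · rw [hk.neg_one_pow] at h1; rw [hm.neg_one_pow] at h2; linarith
  · rw [Nat.odd_iff] at hk hm; omega

lemma count_eq_self {N : ℕ} (k : ℕ → ℕ) (hmono : ∀ i, i + 1 < N → k i ≤ k (i+1))
    (hpar : ∀ i, i < N → k i % 2 = i % 2)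
    (htop : 0 < N → k (N-1) ≤ N - 1) :
    ∀ i, i < N → k i = i := by
  have hlow : ∀ i, i < N → i ≤ k i := by
    intro i
    induction i with
    | zero => intro _; exact Nat.zero_le _
    | succ i ih =>
      intro hi
      have h1 := ih (by omega)
      have h2 := hmono i hi
      have p1 := hpar i (by omega)
      have p2 := hpar (i+1) hi
      omega
  have hupp : ∀ d, d < N → k (N-1-d) ≤ N-1-d := by
    intro d
    induction d with
    | zero => intro h; simpa using htop (by omega)
    | succ d ih =>
      intro hd
      have h1 := ih (by omega)
      have h2 := hmono (N-1-(d+1)) (by omega)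
      have hj : N-1-(d+1)+1 = N-1-d := by omega
      rw [hj] at h2
      have p1 := hpar (N-1-(d+1)) (by omega)
      have p2 := hpar (N-1-d) (by omega)
      omega
  intro i hi
  have l1 := hlow i hi
  have l2 := hupp (N-1-i) (by omega)
  have hj : N-1-(N-1-i) = i := by omega
  rw [hj] at l2
  omega



lemma natDegree_deriv {p : ℝ[X]} (hp0 : p ≠ 0) (hn : 1 ≤ p.natDegree) :
    derivative p ≠ 0 ∧ (derivative p).natDegree = p.natDegree - 1 := by
  have hc : (derivative p).coeff (p.natDegree - 1) ≠ 0 := by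
    rw [coeff_derivative]
    have h1 : p.natDegree - 1 + 1 = p.natDegree := by omega
    rw [h1]
    have h2 : p.coeff p.natDegree ≠ 0 := by
      rw [← leadingCoeff]; exact leadingCoeff_ne_zero.mpr hp0
    have h3 : ((p.natDegree - 1 : ℕ) : ℝ) + 1 ≠ 0 := by positivity
    exact mul_ne_zero h2 h3
  have hne : derivative p ≠ 0 := fun h => hc (by simp [h])
  have hge : p.natDegree - 1 ≤ (derivative p).natDegree := le_natDegree_of_ne_zero hc
  have hlt : (derivative p).natDegree < p.natDegree := natDegree_derivative_lt (by omega)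
  exact ⟨hne, by omega⟩

lemma leadingCoeff_deriv {p : ℝ[X]} (hp0 : p ≠ 0) (hn : 1 ≤ p.natDegree) :
    (derivative p).leadingCoeff = (p.natDegree : ℝ) * p.leadingCoeff := by
  obtain ⟨hne, hdeg⟩ := natDegree_deriv hp0 hn
  rw [leadingCoeff, hdeg, coeff_derivative]
  have h1 : p.natDegree - 1 + 1 = p.natDegree := by omega
  rw [h1, ← leadingCoeff]
  have h2 : ((p.natDegree - 1 : ℕ) : ℝ) + 1 = (p.natDegree : ℝ) := by
    exact_mod_cast congrArg (Nat.cast : ℕ → ℝ) h1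
  rw [h2]
  ring

lemma deriv_roots {p : ℝ[X]} {u : List ℝ} (hp : p.roots = ↑u)
    (hsort : u.Pairwise (· > ·)) (hlen : u.length = p.natDegree) (hn : 1 ≤ u.length) :
    ∃ w : List ℝ, (derivative p).roots = ↑w ∧ w.Pairwise (· > ·) ∧
      w.length = u.length - 1 ∧
      ∀ i, i + 1 < u.length → u.getD (i+1) 0 < w.getD i 0 ∧ w.getD i 0 < u.getD i 0 := by
  have hp0 : p ≠ 0 := by
    intro h
    rw [h, roots_zero] at hp
    have := congrArg Multiset.card hp
    simp at this
    omega
  obtain ⟨hd0, hddeg⟩ := natDegree_deriv hp0 (hlen ▸ hn)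
  have hroot : ∀ i, i < u.length → p.eval (u.getD i 0) = 0 := by
    intro i hi
    have : u.getD i 0 ∈ p.roots := by
      rw [hp, List.getD_eq_getElem _ _ hi]
      exact_mod_cast List.getElem_mem _
    exact (mem_roots hp0).mp this
  have H : ∀ i : Fin (u.length - 1), ∃ c,
      u.getD (i+1) 0 < c ∧ c < u.getD i 0 ∧ (derivative p).eval c = 0 := by
    intro ⟨i, hi⟩
    have hi1 : i + 1 < u.length := by omega
    have hlt : u.getD (i+1) 0 < u.getD i 0 := sorted_getD_lt hsort (Nat.lt_succ_self i) hi1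
    have heq : p.eval (u.getD (i+1) 0) = p.eval (u.getD i 0) := by
      rw [hroot _ hi1, hroot _ (by omega)]
    obtain ⟨z, hz1, hz2⟩ := exists_deriv_eq_zero hlt p.continuousOn heq
    refine ⟨z, hz1.1, hz1.2, ?_⟩
    rwa [← p.deriv]
  choose c hc1 hc2 hc3 using H
  set w : List ℝ := List.ofFn c with hw
  have hwlen : w.length = u.length - 1 := by simp [hw]
  have hwgetD : ∀ i (hi : i < u.length - 1), w.getD i 0 = c ⟨i, hi⟩ := by
    intro i hi
    rw [List.getD_eq_getElem _ _ (by omega : i < w.length)]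
    simp [hw]
  have hwsort : w.Pairwise (· > ·) := by
    apply List.pairwise_iff_getElem.mpr
    intro i j hi hj hij
    rw [hwlen] at hi hj
    have e1 : w[i] = c ⟨i, hi⟩ := by simp [hw]
    have e2 : w[j] = c ⟨j, hj⟩ := by simp [hw]
    rw [e1, e2]
    calc c ⟨j, hj⟩ < u.getD j 0 := hc2 ⟨j, hj⟩
      _ ≤ u.getD (i+1) 0 := sorted_getD_le hsort (by omega) (by omega)
      _ < c ⟨i, hi⟩ := hc1 ⟨i, hi⟩
  have hwint : ∀ i, i + 1 < u.length →
      u.getD (i+1) 0 < w.getD i 0 ∧ w.getD i 0 < u.getD i 0 := by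
    intro i hi
    have hi' : i < u.length - 1 := by omega
    rw [hwgetD i hi']
    exact ⟨hc1 ⟨i, hi'⟩, hc2 ⟨i, hi'⟩⟩
  have hwnodup : w.Nodup := hwsort.imp ne_of_gt
  have hle : (↑w : Multiset ℝ) ≤ (derivative p).roots := by
    rw [Multiset.le_iff_count]
    intro a
    by_cases ha : a ∈ w
    · have h1 : Multiset.count a (↑w : Multiset ℝ) = 1 := by
        rw [Multiset.coe_count]
        exact List.count_eq_one_of_mem hwnodup ha
      rw [h1]
      rw [Multiset.one_le_count_iff_mem]
      obtain ⟨i, hi, rfl⟩ := List.mem_iff_getElem.mp ha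
      rw [mem_roots hd0]
      have hi' : i < u.length - 1 := by omega
      have : w[i] = c ⟨i, hi'⟩ := by simp [hw]
      rw [this]
      exact hc3 _
    · rw [Multiset.coe_count, List.count_eq_zero_of_not_mem ha]
      exact Nat.zero_le _
  have hcard : Multiset.card ((derivative p).roots) ≤ Multiset.card (↑w : Multiset ℝ) := by
    rw [Multiset.coe_card, hwlen, hlen, ← hddeg]
    exact card_roots' _
  exact ⟨w, (Multiset.eq_of_le_of_card_le hle hcard).symm, hwsort, hwlen, hwint⟩



lemma eval_sign_pos {p : ℝ[X]} {l : List ℝ} (hp0 : p ≠ 0) (hp : p.roots = ↑l)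
    (hlen : l.length = p.natDegree) {t : ℝ} {k : ℕ} (hk : k ≤ l.length)
    (h1 : ∀ j, j < k → t < l.getD j 0) (h2 : ∀ j, k ≤ j → j < l.length → l.getD j 0 < t) :
    0 < (-1 : ℝ)^k * p.leadingCoeff * p.eval t := by
  have hprod := prod_sign_pos t l k hk h1 h2
  rw [eval_eq_prod hp0 hp hlen]
  have ha : p.leadingCoeff ≠ 0 := leadingCoeff_ne_zero.mpr hp0
  have key : (-1 : ℝ)^k * p.leadingCoeff * (p.leadingCoeff * (l.map (fun z => t - z)).prod)
      = (p.leadingCoeff * p.leadingCoeff) * ((-1 : ℝ)^k * (l.map (fun z => t - z)).prod) := by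
    ring
  rw [key]
  exact mul_pos (mul_self_pos.mpr ha) hprod

lemma inv_sign {i : ℕ} {x : ℝ} (h : 0 < (-1 : ℝ)^i * x) : 0 < (-1 : ℝ)^i * x⁻¹ := by
  have hx : x ≠ 0 := by
    rintro rfl
    simp at h
  have key : (-1 : ℝ)^i * x⁻¹ = ((-1 : ℝ)^i * x) * (x⁻¹ * x⁻¹) := by
    field_simp
  rw [key]
  exact mul_pos h (mul_self_pos.mpr (inv_ne_zero hx))

lemma W_sign {f g : ℝ[X]} {u v : List ℝ}
    (hfr : f.roots = ↑u) (hus : u.Pairwise (· > ·)) (hflen : u.length = f.natDegree)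
    (hgr : g.roots = ↑v) (hvs : v.Pairwise (· > ·)) (hglen : v.length = g.natDegree)
    (hg0 : g ≠ 0)
    (hn : 1 ≤ u.length) (hmn : v.length ≤ u.length) (hm2 : u.length ≤ v.length + 1)
    (hvu : ∀ j, j < v.length → v.getD j 0 < u.getD j 0)
    (huv : ∀ j, j + 1 < u.length → j < v.length → u.getD (j+1) 0 < v.getD j 0) :
    ∀ t : ℝ, f.leadingCoeff * g.leadingCoeff *
      ((derivative g).eval t * f.eval t - g.eval t * (derivative f).eval t) < 0 := by
  have hf0 : f ≠ 0 := by
    intro hh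
    rw [hh, roots_zero] at hfr
    have := congrArg Multiset.card hfr
    simp at this
    omega
  set n := u.length with hn'
  set a := f.leadingCoeff with ha'
  set b := g.leadingCoeff with hb'
  have ha : a ≠ 0 := leadingCoeff_ne_zero.mpr hf0
  have hb : b ≠ 0 := leadingCoeff_ne_zero.mpr hg0
  set vm : ℕ → ℝ := fun i => u.getD i 0 with hvm
  have hinj : Set.InjOn vm (Finset.range n) := by
    intro i hi j hj hij
    simp only [Finset.coe_range, Set.mem_Iio] at hi hj
    by_contra hne
    rcases Nat.lt_or_ge i j with h | h
    · exact absurd hij (ne_of_gt (sorted_getD_lt hus h hj))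
    · have h' : j < i := by omega
      exact absurd hij.symm (ne_of_gt (sorted_getD_lt hus h' hi))
  -- the reduced polynomial r
  set cc := g.coeff n / a with hcc
  set r := g - C cc * f with hr
  have hfn : f.coeff n = a := by rw [hflen]; rfl
  have hrdeg : r.degree < (n : ℕ) := by
    rw [degree_lt_iff_coeff_zero]
    intro k hk
    rcases eq_or_lt_of_le hk with rfl | hk'
    · simp only [hr, coeff_sub, coeff_C_mul, hfn, hcc]
      field_simp
      simp
    · have h1 : g.coeff k = 0 := coeff_eq_zero_of_natDegree_lt (by omega)
      have h2 : f.coeff k = 0 := coeff_eq_zero_of_natDegree_lt (by omega)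
      simp [hr, coeff_sub, coeff_C_mul, h1, h2]
  have hrg : ∀ i, i < n → r.eval (vm i) = g.eval (vm i) := by
    intro i hi
    have hroot : f.eval (vm i) = 0 := by
      have : vm i ∈ f.roots := by
        rw [hfr, hvm]
        simp only []
        rw [List.getD_eq_getElem _ _ hi]
        exact_mod_cast List.getElem_mem _
      exact (mem_roots hf0).mp this
    simp [hr, eval_sub, eval_mul, eval_C, hroot]
  -- Lagrange
  have hinterp := Lagrange.eq_interpolate (f := r) hinj (by rwa [card_range])
  set hh : ℕ → ℝ[X] := fun i => ∏ j ∈ (Finset.range n).erase i, (X - C (vm j)) with hhh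
  set e : ℕ → ℝ := fun i => g.eval (vm i) * ∏ j ∈ (Finset.range n).erase i, (vm i - vm j)⁻¹
    with he
  have hbasis : ∀ i ∈ Finset.range n,
      C (r.eval (vm i)) * Lagrange.basis (Finset.range n) vm i = C (e i) * hh i := by
    intro i hi
    rw [Lagrange.basis]
    have : ∀ j ∈ (Finset.range n).erase i, Lagrange.basisDivisor (vm i) (vm j)
        = C ((vm i - vm j)⁻¹) * (X - C (vm j)) := fun j _ => rfl
    rw [Finset.prod_congr rfl this, Finset.prod_mul_distrib, ← map_prod]
    rw [hrg i (Finset.mem_range.mp hi), he]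
    simp only [map_mul]
    ring
  have hreq : r = ∑ i ∈ Finset.range n, C (e i) * hh i := by
    conv_lhs => rw [hinterp]
    rw [Lagrange.interpolate_apply]
    exact Finset.sum_congr rfl hbasis
  -- f in product form
  have hfprod := poly_eq_prod_range hf0 hfr hflen
  have hfi : ∀ i ∈ Finset.range n, f = C a * ((X - C (vm i)) * hh i) := by
    intro i hi
    rw [hfprod]
    congr 1
    rw [← Finset.mul_prod_erase _ _ hi]
  -- key identity per term
  have hterm : ∀ i ∈ Finset.range n,
      derivative (C (e i) * hh i) * f - (C (e i) * hh i) * derivative f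
        = -(C (e i) * C a * (hh i)^2) := by
    intro i hi
    have hfe := hfi i hi
    have hdf : derivative f = C a * (hh i + (X - C (vm i)) * derivative (hh i)) := by
      conv_lhs => rw [hfe]
      rw [derivative_C_mul, derivative_mul, derivative_sub, derivative_X, derivative_C]
      ring
    rw [hdf, derivative_C_mul]
    conv_lhs => rw [hfe]
    ring
  -- sum identity
  have hW : derivative r * f - r * derivative f
      = -(C a) * ∑ i ∈ Finset.range n, C (e i) * (hh i)^2 := by
    calc derivative r * f - r * derivative f
        = ∑ i ∈ Finset.range n,
            (derivative (C (e i) * hh i) * f - (C (e i) * hh i) * derivative f) := by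
          conv_lhs => rw [hreq]
          rw [map_sum, Finset.sum_mul, Finset.sum_mul, Finset.sum_sub_distrib]
      _ = ∑ i ∈ Finset.range n, -(C (e i) * C a * (hh i)^2) := Finset.sum_congr rfl hterm
      _ = -(C a) * ∑ i ∈ Finset.range n, C (e i) * (hh i)^2 := by
          rw [Finset.mul_sum]
          exact Finset.sum_congr rfl fun i _ => by ring
  have hWg : derivative g * f - g * derivative f
      = -(C a) * ∑ i ∈ Finset.range n, C (e i) * (hh i)^2 := by
    rw [← hW, hr, derivative_sub, derivative_C_mul]
    ring
  -- positivity of coefficients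
  have hbe : ∀ i, i < n → 0 < b * e i := by
    intro i hi
    have hging : 0 < (-1:ℝ)^i * b * g.eval (vm i) := by
      apply eval_sign_pos hg0 hgr hglen (t := vm i) (k := i)
      · omega
      · intro j hj
        have h1 : u.getD (j+1) 0 < v.getD j 0 := huv j (by omega) (by omega)
        have h2 : u.getD i 0 ≤ u.getD (j+1) 0 := sorted_getD_le hus (by omega) hi
        have : u.getD i 0 < v.getD j 0 := lt_of_le_of_lt h2 h1
        exact this
      · intro j hij hj
        have h1 : v.getD j 0 ≤ v.getD i 0 := sorted_getD_le hvs hij hj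
        have h2 : v.getD i 0 < u.getD i 0 := hvu i (by omega)
        have : v.getD j 0 < u.getD i 0 := lt_of_le_of_lt h1 h2
        exact this
    have h2i : ((-1:ℝ)^i) * ((-1)^i) = 1 := by
      rw [← pow_add]
      exact Even.neg_one_pow ⟨i, rfl⟩
    have hprodsign : 0 < (-1:ℝ)^i * ∏ j ∈ (Finset.range n).erase i, (vm i - vm j)⁻¹ := by
      rw [Finset.prod_inv_distrib]
      apply inv_sign
      have hsplit : (Finset.range n).erase i = Finset.range i ∪ Finset.Ico (i+1) n := by
        ext j
        simp only [Finset.mem_erase, Finset.mem_range, Finset.mem_union, Finset.mem_Ico]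
        omega
      have hdisj : Disjoint (Finset.range i) (Finset.Ico (i+1) n) := by
        rw [Finset.disjoint_left]
        intro j hj hj'
        simp only [Finset.mem_range] at hj
        simp only [Finset.mem_Ico] at hj'
        omega
      rw [hsplit, Finset.prod_union hdisj]
      have hneg : ∏ j ∈ Finset.range i, (vm i - vm j)
          = (-1:ℝ)^i * ∏ j ∈ Finset.range i, (vm j - vm i) := by
        calc ∏ j ∈ Finset.range i, (vm i - vm j)
            = ∏ j ∈ Finset.range i, ((-1) * (vm j - vm i)) :=
              Finset.prod_congr rfl (fun j _ => by ring)
          _ = (-1:ℝ)^i * ∏ j ∈ Finset.range i, (vm j - vm i) := by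
              rw [Finset.prod_mul_distrib, Finset.prod_const, Finset.card_range]
      have hpos1 : 0 < ∏ j ∈ Finset.range i, (vm j - vm i) := by
        apply Finset.prod_pos
        intro j hj
        have := sorted_getD_lt hus (Finset.mem_range.mp hj) hi
        simp only [hvm]
        linarith
      have hpos2 : 0 < ∏ j ∈ Finset.Ico (i+1) n, (vm i - vm j) := by
        apply Finset.prod_pos
        intro j hj
        have hj' := Finset.mem_Ico.mp hj
        have := sorted_getD_lt hus (by omega : i < j) (by omega)
        simp only [hvm]
        linarith
      rw [hneg]
      calc (0:ℝ) < (∏ j ∈ Finset.range i, (vm j - vm i)) * ∏ j ∈ Finset.Ico (i+1) n, (vm i - vm j) :=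
            mul_pos hpos1 hpos2
        _ = (-1:ℝ)^i * ((-1:ℝ)^i * (∏ j ∈ Finset.range i, (vm j - vm i)) * ∏ j ∈ Finset.Ico (i+1) n, (vm i - vm j)) := by
            rw [show ((-1:ℝ)^i * ((-1:ℝ)^i * (∏ j ∈ Finset.range i, (vm j - vm i)) * ∏ j ∈ Finset.Ico (i+1) n, (vm i - vm j)))
              = (((-1:ℝ)^i) * ((-1:ℝ)^i)) * ((∏ j ∈ Finset.range i, (vm j - vm i)) * ∏ j ∈ Finset.Ico (i+1) n, (vm i - vm j)) from by ring,
              h2i, one_mul]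
        _ = (-1:ℝ)^i * (((-1:ℝ)^i * ∏ j ∈ Finset.range i, (vm j - vm i)) * ∏ j ∈ Finset.Ico (i+1) n, (vm i - vm j)) := by ring
    have hei : b * e i = ((-1:ℝ)^i * b * g.eval (vm i))
        * ((-1:ℝ)^i * ∏ j ∈ (Finset.range n).erase i, (vm i - vm j)⁻¹) := by
      calc b * e i = (((-1:ℝ)^i) * ((-1:ℝ)^i)) * (b * e i) := by rw [h2i, one_mul]
        _ = ((-1:ℝ)^i * b * g.eval (vm i))
            * ((-1:ℝ)^i * ∏ j ∈ (Finset.range n).erase i, (vm i - vm j)⁻¹) := by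
            simp only [he]
            ring
    rw [hei]
    exact mul_pos hging hprodsign
  -- nonvanishing of some hh i at t
  have hex : ∀ t : ℝ, ∃ i ∈ Finset.range n, eval t (hh i) ≠ 0 := by
    intro t
    by_cases hcase : ∃ k, k < n ∧ t = vm k
    · obtain ⟨k, hk, rfl⟩ := hcase
      refine ⟨k, Finset.mem_range.mpr hk, ?_⟩
      simp only [hhh, eval_prod, eval_sub, eval_X, eval_C]
      rw [Finset.prod_ne_zero_iff]
      intro j hj h0
      have hj' := Finset.mem_erase.mp hj
      have hjn := Finset.mem_range.mp hj'.2
      have heq : vm k = vm j := by linarith [sub_eq_zero.mp h0]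
      exact hj'.1 (hinj (by simp [hjn]) (by simp [hk]) heq.symm)
    · push_neg at hcase
      refine ⟨0, Finset.mem_range.mpr (by omega), ?_⟩
      simp only [hhh, eval_prod, eval_sub, eval_X, eval_C]
      rw [Finset.prod_ne_zero_iff]
      intro j hj h0
      have hjn := Finset.mem_range.mp (Finset.mem_erase.mp hj).2
      exact hcase j hjn (by linarith [sub_eq_zero.mp h0])
  -- final
  intro t
  have h0 := congrArg (eval t) hWg
  simp only [eval_sub, eval_mul, eval_neg, eval_C, eval_finset_sum, eval_pow] at h0
  rw [h0]
  obtain ⟨i0, hi0, hne⟩ := hex t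
  have hbS : 0 < ∑ i ∈ Finset.range n, b * (e i * (eval t (hh i))^2) := by
    apply Finset.sum_pos'
    · intro i hi
      have h1 := (hbe i (Finset.mem_range.mp hi)).le
      have hsq : 0 ≤ (eval t (hh i))^2 := sq_nonneg _
      calc (0:ℝ) ≤ (b * e i) * (eval t (hh i))^2 := mul_nonneg h1 hsq
        _ = b * (e i * (eval t (hh i))^2) := by ring
    · refine ⟨i0, hi0, ?_⟩
      have h1 := hbe i0 (Finset.mem_range.mp hi0)
      have h2 : 0 < (eval t (hh i0))^2 := by rw [pow_two]; exact mul_self_pos.mpr hne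
      calc (0:ℝ) < (b * e i0) * (eval t (hh i0))^2 := mul_pos h1 h2
        _ = b * (e i0 * (eval t (hh i0))^2) := by ring
  have hbS2 : 0 < b * ∑ i ∈ Finset.range n, e i * (eval t (hh i))^2 := by
    rw [Finset.mul_sum]
    exact hbS
  nlinarith [mul_self_pos.mpr ha, hbS2]


lemma small_deriv (p : ℝ[X]) (hp : p.natDegree ≤ 1) : (derivative p).roots = 0 := by
  have hd : (derivative p).natDegree = 0 := by
    rcases Nat.le_one_iff_eq_zero_or_eq_one.mp hp with h | h
    · obtain ⟨c, rfl⟩ := Polynomial.natDegree_eq_zero.mp h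
      simp
    · have := natDegree_derivative_lt (p := p) (by omega)
      omega
  have h1 := card_roots' (derivative p)
  rw [hd] at h1
  exact Multiset.card_eq_zero.mp (le_antisymm h1 (Nat.zero_le _))

end MarkovAux

open MarkovAux in
/-- Markov's theorem: if `g` strictly interlaces (or strictly alternates left of)
`f`, where `f` and `g` have only real and distinct zeros, then the same relation
holds between their derivatives. -/
theorem markov_derivative_interlacing (f g : Polynomial ℝ)
    (hf : f.roots.card = f.natDegree) (hf' : f.roots.Nodup)
    (hg : g.roots.card = g.natDegree) (hg' : g.roots.Nodup)
    (h : StrictlyPrec g f) :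
    StrictlyPrec (Polynomial.derivative g) (Polynomial.derivative f) := by
  classical
  obtain ⟨u, v, hfr, hgr, hus, hvs, hcase⟩ := h
  have hflen : u.length = f.natDegree := by rw [hfr] at hf; simpa using hf
  have hglen : v.length = g.natDegree := by rw [hgr] at hg; simpa using hg
  by_cases hn1 : u.length ≤ 1
  · have hm1 : v.length ≤ 1 := by rcases hcase with ⟨h1, _⟩ | ⟨h1, _⟩ <;> omega
    have hdf : (derivative f).roots = 0 := small_deriv f (by omega)
    have hdg : (derivative g).roots = 0 := small_deriv g (by omega)
    exact ⟨[], [], by simpa using hdf, by simpa using hdg, List.Pairwise.nil, List.Pairwise.nil,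
      Or.inr ⟨rfl, fun i hi => absurd hi (by simp)⟩⟩
  · push_neg at hn1
    have hm1 : 1 ≤ v.length ∧ v.length ≤ u.length ∧ u.length ≤ v.length + 1 := by
      rcases hcase with ⟨h1, _⟩ | ⟨h1, _⟩ <;> omega
    have hg0 : g ≠ 0 := by
      intro hzero
      rw [hzero, roots_zero] at hgr
      have : v = [] := (Multiset.coe_eq_zero _).mp hgr.symm
      rw [this] at hm1
      simp at hm1
    have hf0 : f ≠ 0 := by
      intro hzero
      rw [hzero, roots_zero] at hfr
      have : u = [] := (Multiset.coe_eq_zero _).mp hfr.symm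
      rw [this] at hn1
      simp at hn1
    have hvu : ∀ j, j < v.length → v.getD j 0 < u.getD j 0 := by
      intro j hj
      rcases hcase with ⟨h1, h2⟩ | ⟨h1, h2⟩
      · exact (h2 j hj).2
      · exact (h2 j hj).1
    have huv : ∀ j, j + 1 < u.length → j < v.length → u.getD (j+1) 0 < v.getD j 0 := by
      intro j hj1 hj2
      rcases hcase with ⟨h1, h2⟩ | ⟨h1, h2⟩
      · exact (h2 j hj2).1
      · exact (h2 j hj2).2 hj1
    have hW := W_sign hfr hus hflen hgr hvs hglen hg0 (by omega) hm1.2.1 hm1.2.2 hvu huv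
    obtain ⟨w, hwr, hws, hwlen, hwint⟩ := deriv_roots hfr hus hflen (by omega)
    obtain ⟨x, hxr, hxs, hxlen, _⟩ := deriv_roots hgr hvs hglen (by omega)
    obtain ⟨hdf0, hdfdeg⟩ := natDegree_deriv hf0 (by omega)
    obtain ⟨hdg0, hdgdeg⟩ := natDegree_deriv hg0 (by omega)
    have hxlen' : x.length = (derivative g).natDegree := by omega
    have key : ∀ i, i < u.length - 1 →
        0 < (-1:ℝ)^i * g.leadingCoeff * (derivative g).eval (w.getD i 0) := by
      intro i hi
      have hint := hwint i (by omega)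
      have hwroot : (derivative f).eval (w.getD i 0) = 0 := by
        have hmem : w.getD i 0 ∈ (derivative f).roots := by
          rw [hwr, List.getD_eq_getElem _ _ (by omega : i < w.length)]
          exact_mod_cast List.getElem_mem _
        exact (mem_roots hdf0).mp hmem
      have hWt := hW (w.getD i 0)
      rw [hwroot, mul_zero, sub_zero] at hWt
      have hfw : 0 < (-1:ℝ)^(i+1) * f.leadingCoeff * f.eval (w.getD i 0) := by
        apply eval_sign_pos hf0 hfr hflen (by omega)
        · intro j hj
          have h1 : w.getD i 0 < u.getD i 0 := hint.2
          have h2 : u.getD i 0 ≤ u.getD j 0 := sorted_getD_le hus (by omega) (by omega)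
          linarith
        · intro j hj1 hj2
          have h1 : u.getD (i+1) 0 < w.getD i 0 := hint.1
          have h2 : u.getD j 0 ≤ u.getD (i+1) 0 := sorted_getD_le hus (by omega) hj2
          linarith
      rcases Nat.even_or_odd i with hpar | hpar
      · rw [(Even.add_one hpar).neg_one_pow] at hfw
        rw [hpar.neg_one_pow]
        nlinarith [hWt, hfw]
      · rw [(Odd.add_one hpar).neg_one_pow] at hfw
        rw [hpar.neg_one_pow]
        nlinarith [hWt, hfw]
    have hKex : ∀ i, i < u.length - 1 → ∃ k, k ≤ x.length ∧
        (∀ j, j < k → w.getD i 0 < x.getD j 0) ∧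
        (∀ j, k ≤ j → j < x.length → x.getD j 0 < w.getD i 0) := by
      intro i hi
      apply split_sorted hxs
      intro hmem
      have hz : (derivative g).eval (w.getD i 0) = 0 := by
        have : w.getD i 0 ∈ (derivative g).roots := by rw [hxr]; exact_mod_cast hmem
        exact (mem_roots hdg0).mp this
      have hk := key i hi
      rw [hz, mul_zero] at hk
      exact lt_irrefl 0 hk
    choose K hK1 hK2 hK3 using hKex
    set KK : ℕ → ℕ := fun i => if h : i < u.length - 1 then K i h else 0 with hKKdef
    have hKK1 : ∀ i (h : i < u.length - 1), KK i = K i h := fun i h => dif_pos h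
    have hKb : ∀ i, i < u.length - 1 → KK i ≤ x.length := by
      intro i h; rw [hKK1 i h]; exact hK1 i h
    have hKw1 : ∀ i, i < u.length - 1 → ∀ j, j < KK i → w.getD i 0 < x.getD j 0 := by
      intro i h; rw [hKK1 i h]; exact hK2 i h
    have hKw2 : ∀ i, i < u.length - 1 → ∀ j, KK i ≤ j → j < x.length →
        x.getD j 0 < w.getD i 0 := by
      intro i h; rw [hKK1 i h]; exact hK3 i h
    have hparK : ∀ i, i < u.length - 1 → KK i % 2 = i % 2 := by
      intro i hi
      have hsx : 0 < (-1:ℝ)^(KK i) * (derivative g).leadingCoeff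
          * (derivative g).eval (w.getD i 0) :=
        eval_sign_pos hdg0 hxr hxlen' (hKb i hi) (hKw1 i hi) (hKw2 i hi)
      have hlc : (derivative g).leadingCoeff = (g.natDegree : ℝ) * g.leadingCoeff :=
        leadingCoeff_deriv hg0 (by omega)
      have hmpos : (0:ℝ) < (g.natDegree : ℝ) := by
        have : 0 < g.natDegree := by omega
        exact_mod_cast this
      have hsx' : 0 < (-1:ℝ)^(KK i)
          * (g.leadingCoeff * (derivative g).eval (w.getD i 0)) := by
        rw [hlc] at hsx
        nlinarith [hsx, hmpos]
      have hky := key i hi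
      rw [mul_assoc] at hky
      exact parity_of_sign hsx' hky
    have hmono : ∀ i, i + 1 < u.length - 1 → KK i ≤ KK (i+1) := by
      intro i hi
      by_contra hcon
      push_neg at hcon
      have hj1 : KK (i+1) < x.length := lt_of_lt_of_le hcon (hKb i (by omega))
      have h1 := hKw1 i (by omega) (KK (i+1)) hcon
      have h2 := hKw2 (i+1) hi (KK (i+1)) le_rfl hj1
      have h3 : w.getD (i+1) 0 < w.getD i 0 := sorted_getD_lt hws (by omega) (by omega)
      linarith
    have htop : 0 < u.length - 1 → KK (u.length - 1 - 1) ≤ u.length - 1 - 1 := by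
      intro hpos
      have hb1 := hKb (u.length - 1 - 1) (by omega)
      rcases hcase with ⟨h1, _⟩ | ⟨h1, _⟩
      · omega
      · have hp := hparK (u.length - 1 - 1) (by omega)
        omega
    have hKeq : ∀ i, i < u.length - 1 → KK i = i :=
      count_eq_self KK hmono hparK htop
    refine ⟨w, x, hwr, hxr, hws, hxs, ?_⟩
    rcases hcase with ⟨h1, _⟩ | ⟨h1, _⟩
    · left
      refine ⟨by omega, ?_⟩
      intro i hi
      constructor
      · exact hKw1 (i+1) (by omega) i (by rw [hKeq (i+1) (by omega)]; omega)
      · exact hKw2 i (by omega) i (le_of_eq (hKeq i (by omega))) hi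
    · right
      refine ⟨by omega, ?_⟩
      intro i hi
      refine ⟨hKw2 i (by omega) i (le_of_eq (hKeq i (by omega))) hi, ?_⟩
      intro hi2
      exact hKw1 (i+1) (by omega) i (by rw [hKeq (i+1) (by omega)]; omega)
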